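/- Let q be a prime power, m = ord_n(q) ≥ 2, and suppose κ = n·(q^⌈m/2⌉ − 1 − (q−2)·[m odd])/(q^m − 1) is an integer. If δ > κ, then for the defining set Z = C_1 ∪ ⋯ ∪ C_{δ−1} of the narrow-sense BCH code, Z ∩ Z^{-1} ≠ ∅. Specifically: if m is even, then −κ·q^{⌊m/2⌋} ≡ κ (mod n); if m is odd, then s = n·(q^⌈m/2⌉ − q^⌊m/2⌋ − 1)/(q^m − 1) satisfies s < κ and −κ·q^{⌊m/2⌋} ≡ s (mod n). -/

import Mathlib

lemma bch_mem_aux (n q δ κ w a : ℕ) (Z : Set ℕ)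
    (hZ : Z = ⋃ x ∈ Set.Icc 1 (δ - 1), {z : ℕ | ∃ j : ℕ, z = x * q ^ j % n})
    (hq : 1 ≤ q)
    (h1 : κ * q ^ a + w = n) (hw1 : 1 ≤ w) (hwδ : w ≤ δ - 1)
    (hκ1 : 1 ≤ κ) (hκδ : κ ≤ δ - 1) :
    w ∈ Z ∩ ((fun z => (n - z % n) % n) '' Z) := by
  have hq0 : 1 ≤ q ^ a := Nat.one_le_pow _ _ hq
  have hκq : 1 ≤ κ * q ^ a := Nat.one_le_iff_ne_zero.mpr (by positivity)
  have hwn : w < n := by omega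
  have hz : κ * q ^ a % n = n - w := by
    have h2 : κ * q ^ a = n - w := by omega
    rw [h2]; exact Nat.mod_eq_of_lt (by omega)
  constructor
  · rw [hZ]
    simp only [Set.mem_iUnion, Set.mem_setOf_eq, Set.mem_Icc]
    exact ⟨w, ⟨hw1, hwδ⟩, 0, by simp [Nat.mod_eq_of_lt hwn]⟩
  · refine ⟨κ * q ^ a % n, ?_, ?_⟩
    · rw [hZ]
      simp only [Set.mem_iUnion, Set.mem_setOf_eq, Set.mem_Icc]
      exact ⟨κ, ⟨hκ1, hκδ⟩, a, rfl⟩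
    · show (n - (κ * q ^ a % n) % n) % n = w
      rw [hz]
      have h4 : (n - w) % n = n - w := Nat.mod_eq_of_lt (by omega)
      rw [h4, Nat.sub_sub_self (by omega : w ≤ n), Nat.mod_eq_of_lt hwn]

/-- if `κ = n(q^⌈m/2⌉ − 1 − (q−2)[m odd])/(q^m − 1)` is an integer and
`δ > κ`, then the defining set `Z = C_1 ∪ ⋯ ∪ C_{δ−1}` satisfies `Z ∩ Z⁻¹ ≠ ∅`;
moreover if `m` is even then `−κ·q^⌊m/2⌋ ≡ κ (mod n)`, and if `m` is odd then
`s = n(q^⌈m/2⌉ − q^⌊m/2⌋ − 1)/(q^m − 1)` satisfies `s < κ` and `−κ·q^⌊m/2⌋ ≡ s (mod n)`. -/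
theorem bch_euclidean_dual_kappa_integral (n q m δ κ : ℕ)
    (hq : IsPrimePow q) (hn : 0 < n) (hcop : Nat.Coprime n q)
    (hm : m = orderOf (q : ZMod n)) (hm2 : 2 ≤ m)
    (hκ : (κ : ℝ) = (n : ℝ) * ((q : ℝ) ^ ((m + 1) / 2) - 1 -
        ((q : ℝ) - 2) * (if Odd m then 1 else 0)) / ((q : ℝ) ^ m - 1))
    (hδ : κ < δ)
    (Z : Set ℕ)
    (hZ : Z = ⋃ x ∈ Set.Icc 1 (δ - 1), {z : ℕ | ∃ j : ℕ, z = x * q ^ j % n}) :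
    (Z ∩ ((fun z => (n - z % n) % n) '' Z)).Nonempty ∧
    (Even m → (κ * q ^ (m / 2) + κ) % n = 0) ∧
    (Odd m → ∃ s : ℝ,
      s = (n : ℝ) * ((q : ℝ) ^ ((m + 1) / 2) - (q : ℝ) ^ (m / 2) - 1) / ((q : ℝ) ^ m - 1) ∧
      s < κ ∧ ∃ t : ℤ, (κ : ℝ) * (q : ℝ) ^ (m / 2) + s = (t : ℝ) * n) := by
  have hq2 : 2 ≤ q := hq.two_le
  have hqR : (2 : ℝ) ≤ (q : ℝ) := by exact_mod_cast hq2
  have hDpos : (0 : ℝ) < (q : ℝ) ^ m - 1 := by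
    have : (1 : ℝ) < (q : ℝ) ^ m := one_lt_pow₀ (by linarith) (by omega)
    linarith
  rcases Nat.even_or_odd m with he | ho
  · -- even case
    obtain ⟨a, ha⟩ := he
    have ha1 : 1 ≤ a := by omega
    have hnotodd : ¬ Odd m := by
      rw [← Nat.not_even_iff_odd]; push_neg; exact ⟨a, ha⟩
    rw [if_neg hnotodd] at hκ
    have h12 : (m + 1) / 2 = a := by omega
    have h2 : m / 2 = a := by omega
    rw [h12] at hκ
    have hpa : (1 : ℝ) < (q : ℝ) ^ a := one_lt_pow₀ (by linarith) (by omega)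
    have h : (κ : ℝ) * ((q : ℝ) ^ m - 1) = (n : ℝ) * ((q : ℝ) ^ a - 1) := by
      field_simp at hκ
      linarith [hκ]
    rw [ha] at h
    have h3 : ((κ : ℝ) * ((q : ℝ) ^ a + 1)) * ((q : ℝ) ^ a - 1)
        = (n : ℝ) * ((q : ℝ) ^ a - 1) := by ring_nf; ring_nf at h; linarith
    have key : (κ : ℝ) * ((q : ℝ) ^ a + 1) = (n : ℝ) :=
      mul_right_cancel₀ (by linarith) h3
    have keyN : κ * (q ^ a + 1) = n := by exact_mod_cast key
    have hsum : κ * q ^ a + κ = n := by rw [← keyN]; ring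
    have hκ1 : 1 ≤ κ := by
      rcases Nat.eq_zero_or_pos κ with h0 | h0
      · subst h0; simp at hsum; omega
      · omega
    refine ⟨⟨κ, bch_mem_aux n q δ κ κ a Z hZ (by omega) hsum hκ1 (by omega)
        hκ1 (by omega)⟩, ?_, ?_⟩
    · intro _
      rw [h2, hsum, Nat.mod_self]
    · intro hodd; exact absurd hodd hnotodd
  · -- odd case
    obtain ⟨a, ha⟩ := ho
    have ha1 : 1 ≤ a := by omega
    rw [if_pos ⟨a, ha⟩] at hκ
    have h12 : (m + 1) / 2 = a + 1 := by omega
    have h2 : m / 2 = a := by omega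
    rw [h12] at hκ
    have hpa : (2 : ℝ) ≤ (q : ℝ) ^ a := by
      calc (2 : ℝ) ≤ (q : ℝ) := hqR
      _ ≤ (q : ℝ) ^ a := le_self_pow₀ (by linarith) (by omega)
    have h : (κ : ℝ) * ((q : ℝ) ^ m - 1)
        = (n : ℝ) * ((q : ℝ) ^ (a + 1) - (q : ℝ) + 1) := by
      field_simp at hκ
      linarith [hκ]
    rw [ha] at h hDpos
    set sR : ℝ := (n : ℝ) - (κ : ℝ) * (q : ℝ) ^ a with hsR
    have key1 : sR * ((q : ℝ) ^ (2 * a + 1) - 1)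
        = (n : ℝ) * ((q : ℝ) ^ (a + 1) - (q : ℝ) ^ a - 1) := by
      rw [hsR]
      linear_combination (-(q : ℝ) ^ a) * h
    have hnum : (1 : ℝ) ≤ (q : ℝ) ^ (a + 1) - (q : ℝ) ^ a - 1 := by
      have : (q : ℝ) ^ (a + 1) = (q : ℝ) ^ a * (q : ℝ) := pow_succ _ _
      nlinarith
    have hnR : (1 : ℝ) ≤ (n : ℝ) := by exact_mod_cast hn
    have spos : 0 < sR := by nlinarith
    have sltκ : sR < (κ : ℝ) := by
      have hd : ((κ : ℝ) - sR) * ((q : ℝ) ^ (2 * a + 1) - 1)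
          = (n : ℝ) * ((q : ℝ) ^ a - (q : ℝ) + 2) := by
        linear_combination h - key1
      have hqa : (q : ℝ) ≤ (q : ℝ) ^ a := le_self_pow₀ (by linarith) (by omega)
      nlinarith
    have hlt : κ * q ^ a < n := by
      have : ((κ * q ^ a : ℕ) : ℝ) < (n : ℝ) := by push_cast; linarith
      exact_mod_cast this
    set w : ℕ := n - κ * q ^ a with hw
    have hwR : (w : ℝ) = sR := by
      rw [hw, Nat.cast_sub hlt.le]; push_cast; rfl
    have hw1 : 1 ≤ w := by
      by_contra hc
      have : w = 0 := by omega
      rw [this] at hwR; simp at hwR; linarith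
    have hwκ : w < κ := by
      have : (w : ℝ) < (κ : ℝ) := by rw [hwR]; exact sltκ
      exact_mod_cast this
    refine ⟨⟨w, bch_mem_aux n q δ κ w a Z hZ (by omega) (by omega) hw1 (by omega)
        (by omega) (by omega)⟩, ?_, ?_⟩
    · intro hev
      exact absurd hev (by rw [← Nat.not_odd_iff_even]; push_neg; exact ⟨a, ha⟩)
    · intro _
      refine ⟨sR, ?_, sltκ, 1, ?_⟩
      · rw [h12, h2, ha, eq_div_iff (by linarith)]
        exact key1
      · rw [h2, hsR]; push_cast; ring
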